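/- Let B be an n×n real symmetric positive definite matrix and let P_1, …, P_n be the associated lumped preconditioners. Then for every i = 1, …, n, all generalized eigenvalues of the pencil (B, P_i) lie in (0, 1]; moreover, if B has all entries nonnegative, then the largest generalized eigenvalue of (B, P_i) equals 1 (the all-ones vector e satisfies B e = P_i e). -/

import Mathlib

open Matrix

/-- The Euclidean norm of a vector. -/
noncomputable def enorm {m : Type*} [Fintype m] (v : m → ℝ) : ℝ :=
  Real.sqrt (∑ i, (v i) ^ 2)

/-- The square root of a positive semidefinite matrix, as `Matrix.PosSemidef.sqrt` was defined
in the older Mathlib (removed since). -/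
noncomputable def Matrix.PosSemidef.sqrt {m : Type*} [Fintype m] [DecidableEq m]
    {A : Matrix m m ℝ} (hA : A.PosSemidef) : Matrix m m ℝ :=
  (hA.1.eigenvectorUnitary : Matrix m m ℝ) * diagonal ((↑) ∘ (√·) ∘ hA.1.eigenvalues) *
    (star hA.1.eigenvectorUnitary : Matrix m m ℝ)

theorem Matrix.PosSemidef.sqrt_isHermitian {m : Type*} [Fintype m] [DecidableEq m]
    {A : Matrix m m ℝ} (hA : A.PosSemidef) : hA.sqrt.IsHermitian := by
  show hA.sqrtᴴ = hA.sqrt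
  simp only [Matrix.PosSemidef.sqrt, conjTranspose_mul, diagonal_conjTranspose, Matrix.mul_assoc,
    Matrix.star_eq_conjTranspose, conjTranspose_conjTranspose]
  simp [Function.comp_def]

/-- The `k`-th smallest generalized eigenvalue (counted with multiplicity) of the
symmetric pencil `(A, B)` with `B` positive definite, i.e. the `k`-th smallest root of
`det (A - λ B) = 0`.  It is defined as the `k`-th smallest eigenvalue of the Hermitian
matrix `√(B⁻¹) * A * √(B⁻¹)`, which is similar to `B⁻¹ * A`.  Junk value `0` is returned
if `A` is not symmetric or `B` is not positive definite. -/
noncomputable def genEig {m : Type*} [Fintype m] [DecidableEq m]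
    (A B : Matrix m m ℝ) (k : Fin (Fintype.card m)) : ℝ :=
  letI := Classical.propDecidable
  if h : A.IsHermitian ∧ B.PosDef then
    let S : Matrix m m ℝ := (h.2.inv).posSemidef.sqrt
    have hS : S.IsHermitian := (h.2.inv).posSemidef.sqrt_isHermitian
    have hC : (S * A * S).IsHermitian := by
      show (S * A * S)ᴴ = S * A * S
      rw [conjTranspose_mul, conjTranspose_mul, hS.eq, h.1.eq, Matrix.mul_assoc]
    let f : Fin (Fintype.card m) → ℝ := hC.eigenvalues₀
    f (Tuple.sort f k)
  else 0

/-- The `k`-th smallest generalized eigenvalue of a pencil of `n × n` matrices,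
indexed by `Fin n`.  `genEigFin A B 0` is the smallest one, `λ_1(A,B)`, and
`genEigFin A B (Fin.last _)` is the largest one, `λ_n(A,B)`. -/
noncomputable def genEigFin {n : ℕ} (A B : Matrix (Fin n) (Fin n) ℝ) (k : Fin n) : ℝ :=
  genEig A B (Fin.cast (Fintype.card_fin n).symm k)

/-- The (row-sum) lumping operator: `lump B` is the diagonal matrix whose `i`-th
diagonal entry is the sum of the absolute values of the entries of the `i`-th row of `B`. -/
noncomputable def lump {m : Type*} [Fintype m] [DecidableEq m]
    (B : Matrix m m ℝ) : Matrix m m ℝ :=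
  Matrix.diagonal fun i => ∑ j, |B i j|

/-- The banded part `D_i` of a matrix: it keeps all sub- and super-diagonals of index
smaller than `i` (i.e. the entries with `|j - k| < i`) and sets the rest to zero. -/
def diagBand {n : ℕ} (B : Matrix (Fin n) (Fin n) ℝ) (i : ℕ) : Matrix (Fin n) (Fin n) ℝ :=
  Matrix.of fun j k => if |((j : ℕ) : ℤ) - ((k : ℕ) : ℤ)| < (i : ℤ) then B j k else 0

/-- The lumped preconditioner `P_i = D_i + 𝓛(R_i)` where `B = D_i + R_i`, `D_i` being the
banded part of `B` of bandwidth `i` and `R_i` the remainder. -/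
noncomputable def precond {n : ℕ} (B : Matrix (Fin n) (Fin n) ℝ) (i : ℕ) :
    Matrix (Fin n) (Fin n) ℝ :=
  diagBand B i + lump (B - diagBand B i)

lemma Matrix.PosSemidef.posSemidef_sqrt {m : Type*} [Fintype m] [DecidableEq m]
    {A : Matrix m m ℝ} (hA : A.PosSemidef) : hA.sqrt.PosSemidef := by
  unfold Matrix.PosSemidef.sqrt
  have hd : (diagonal ((↑) ∘ (√·) ∘ hA.1.eigenvalues) : Matrix m m ℝ).PosSemidef :=
    Matrix.PosSemidef.diagonal (fun i => by simp [Real.sqrt_nonneg])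
  have := hd.mul_mul_conjTranspose_same (hA.1.eigenvectorUnitary : Matrix m m ℝ)
  simpa [Matrix.star_eq_conjTranspose] using this

lemma Matrix.PosSemidef.sqrt_mul_self {m : Type*} [Fintype m] [DecidableEq m]
    {A : Matrix m m ℝ} (hA : A.PosSemidef) : hA.sqrt * hA.sqrt = A := by
  have hU : (star hA.1.eigenvectorUnitary : Matrix m m ℝ) *
      (hA.1.eigenvectorUnitary : Matrix m m ℝ) = 1 := Unitary.coe_star_mul_self _
  conv_rhs => rw [hA.1.spectral_theorem]
  simp only [Matrix.PosSemidef.sqrt, Unitary.conjStarAlgAut_apply]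
  set U : Matrix m m ℝ := (hA.1.eigenvectorUnitary : Matrix m m ℝ)
  set D : Matrix m m ℝ := diagonal ((↑) ∘ (√·) ∘ hA.1.eigenvalues)
  have hDD : D * D = diagonal (RCLike.ofReal ∘ hA.1.eigenvalues) := by
    simp only [D, diagonal_mul_diagonal]
    congr 1
    funext i
    simp [Real.mul_self_sqrt (hA.eigenvalues_nonneg i)]
  calc U * D * star U * (U * D * star U) = U * D * (star U * U) * D * star U := by
        simp only [Matrix.mul_assoc]
    _ = U * (D * D) * star U := by rw [hU]; simp only [Matrix.mul_one, Matrix.mul_assoc]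
    _ = _ := by rw [hDD]

lemma genEig_spec {m : Type*} [Fintype m] {A P : Matrix m m ℝ}
    (hA : A.IsHermitian) (hP : P.PosDef) (k : Fin (Fintype.card m)) :
    letI := Classical.propDecidable
    ∃ hC : ((hP.inv).posSemidef.sqrt * A * (hP.inv).posSemidef.sqrt).IsHermitian,
      genEig A P k = hC.eigenvalues₀ (Tuple.sort hC.eigenvalues₀ k) := by
  letI := Classical.propDecidable
  rw [genEig, dif_pos (⟨hA, hP⟩ : A.IsHermitian ∧ P.PosDef)]
  exact ⟨_, rfl⟩


lemma conj_posDef'' {m : Type*} [Fintype m] [DecidableEq m] {A S : Matrix m m ℝ} (hA : A.PosDef) (hS : IsUnit S) :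
    (Sᴴ * A * S).PosDef := by
  refine Matrix.PosDef.of_dotProduct_mulVec_pos (Matrix.isHermitian_conjTranspose_mul_mul S hA.1) fun x hx => ?_
  have hinj := Matrix.mulVec_injective_iff_isUnit.mpr hS
  have hx' : S *ᵥ x ≠ 0 := fun h => hx (hinj (h.trans (Matrix.mulVec_zero S).symm))
  simpa only [star_mulVec, dotProduct_mulVec, vecMul_vecMul] using hA.dotProduct_mulVec_pos hx'

lemma genEig_bounds'' {m : Type*} [Fintype m] [DecidableEq m] {A P : Matrix m m ℝ}
    (hA : A.PosDef) (hP : P.PosDef)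
    (hPA : (P - A).PosSemidef) (k : Fin (Fintype.card m)) :
    0 < genEig A P k ∧ genEig A P k ≤ 1 := by
  suffices h : (letI := Classical.propDecidable;
      0 < genEig A P k ∧ genEig A P k ≤ 1) by exact h
  letI := Classical.propDecidable
  obtain ⟨hC, hgeq⟩ := genEig_spec hA.isHermitian hP k
  rw [hgeq]
  set S : Matrix m m ℝ := (hP.inv).posSemidef.sqrt with hSdef
  have hSps : S.PosSemidef := (hP.inv).posSemidef.posSemidef_sqrt
  have hS : S.IsHermitian := hSps.isHermitian
  have hSS : S * S = P⁻¹ := (hP.inv).posSemidef.sqrt_mul_self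
  have hPdet : IsUnit P.det := hP.det_pos.ne'.isUnit
  have hSu : IsUnit S := by
    refine (isUnit_iff_isUnit_det S).2 (isUnit_of_mul_isUnit_left (y := S.det) ?_)
    rw [← det_mul, hSS]
    exact hP.inv.det_pos.ne'.isUnit
  have hSdet : IsUnit S.det := (isUnit_iff_isUnit_det S).1 hSu
  have hCpd : (S * A * S).PosDef := by
    have h := conj_posDef'' hA hSu
    rwa [hS.eq] at h
  have hSPS : S * P * S = 1 := by
    have h1 : S * P * S * S = S := by
      rw [Matrix.mul_assoc (S * P) S S, hSS, Matrix.mul_assoc S P P⁻¹,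
        Matrix.mul_nonsing_inv P hPdet, Matrix.mul_one]
    have h2 := congrArg (· * S⁻¹) h1
    simpa only [Matrix.mul_assoc (S * P * S) S S⁻¹, Matrix.mul_nonsing_inv S hSdet,
      Matrix.mul_one] using h2
  have honePSD : ((1 : Matrix m m ℝ) - S * A * S).PosSemidef := by
    have hone : (1 : Matrix m m ℝ) - S * A * S = S * (P - A) * S := by
      rw [Matrix.mul_sub, Matrix.sub_mul, hSPS]
    have h := hPA.mul_mul_conjTranspose_same S
    rw [hS.eq] at h
    rwa [hone]
  have heig : ∀ j : m, 0 < hC.eigenvalues j ∧ hC.eigenvalues j ≤ 1 := by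
    intro j
    refine ⟨hCpd.eigenvalues_pos j, ?_⟩
    set v : m → ℝ := ⇑(hC.eigenvectorBasis j) with hv
    have hmv : (S * A * S) *ᵥ v = hC.eigenvalues j • v := hC.mulVec_eigenvectorBasis j
    have hvv : v ⬝ᵥ v = 1 := by
      have hnorm := hC.eigenvectorBasis.orthonormal.1 j
      have h2 : (inner ℝ (hC.eigenvectorBasis j) (hC.eigenvectorBasis j) : ℝ) = v ⬝ᵥ v := by
        simp only [EuclideanSpace.inner_eq_star_dotProduct, star_trivial, hv]
      rw [real_inner_self_eq_norm_mul_norm, hnorm, mul_one] at h2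
      exact h2.symm
    have h0 := honePSD.dotProduct_mulVec_nonneg v
    have hsx : star v = v := funext fun j => star_trivial _
    rw [hsx, Matrix.sub_mulVec, Matrix.one_mulVec, hmv, dotProduct_sub, dotProduct_smul,
      smul_eq_mul, hvv] at h0
    linarith
  have hkey : ∀ k' : Fin (Fintype.card m),
      hC.eigenvalues₀ k' = hC.eigenvalues ((Fintype.equivOfCardEq (Fintype.card_fin _)) k') := by
    intro k'
    simp [Matrix.IsHermitian.eigenvalues]
  rw [hkey]
  exact heig _

lemma exists_eigenvalue_one'' {m : Type*} [Fintype m] [DecidableEq m]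
    {C : Matrix m m ℝ} (hC : C.IsHermitian) {v : m → ℝ}
    (hv : v ≠ 0) (hCv : C *ᵥ v = v) : ∃ j, hC.eigenvalues j = 1 := by
  set U : Matrix m m ℝ := (hC.eigenvectorUnitary : Matrix m m ℝ) with hU
  have hUU : U * star U = 1 := (Matrix.mem_unitaryGroup_iff).mp hC.eigenvectorUnitary.2
  have hdiag' : star U * C * U = diagonal hC.eigenvalues := by
    have h := hC.conjStarAlgAut_star_eigenvectorUnitary
    simpa [Unitary.conjStarAlgAut_apply, Function.comp_def] using h
  set w := star U *ᵥ v with hw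
  have hwne : w ≠ 0 := by
    intro h
    apply hv
    have h2 : U *ᵥ (star U *ᵥ v) = U *ᵥ 0 := by rw [← hw, h]
    rwa [mulVec_mulVec, hUU, one_mulVec, mulVec_zero] at h2
  have hDw : diagonal hC.eigenvalues *ᵥ w = w := by
    rw [← hdiag', hw, mulVec_mulVec, mul_assoc (star U * C) U (star U), hUU, mul_one,
      ← mulVec_mulVec, hCv]
  obtain ⟨j, hj⟩ := Function.ne_iff.mp hwne
  refine ⟨j, mul_right_cancel₀ hj ?_⟩
  have h3 := congrFun hDw j
  rw [mulVec_diagonal] at h3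
  rw [h3, one_mul]

lemma one_mem_genEig'' {m : Type*} [Fintype m] [DecidableEq m] {A P : Matrix m m ℝ}
    (hA : A.PosDef) (hP : P.PosDef)
    {v : m → ℝ} (hv : v ≠ 0) (hAv : A *ᵥ v = P *ᵥ v) :
    ∃ k, genEig A P k = 1 := by
  suffices h : (letI := Classical.propDecidable; ∃ k, genEig A P k = 1) by
    obtain ⟨k, hk⟩ := h
    exact ⟨k, hk⟩
  letI := Classical.propDecidable
  set S : Matrix m m ℝ := (hP.inv).posSemidef.sqrt with hSdef
  have hSps : S.PosSemidef := (hP.inv).posSemidef.posSemidef_sqrt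
  have hS : S.IsHermitian := hSps.isHermitian
  have hSS : S * S = P⁻¹ := (hP.inv).posSemidef.sqrt_mul_self
  have hPdet : IsUnit P.det := hP.det_pos.ne'.isUnit
  have hSu : IsUnit S := by
    refine (isUnit_iff_isUnit_det S).2 (isUnit_of_mul_isUnit_left (y := S.det) ?_)
    rw [← det_mul, hSS]
    exact hP.inv.det_pos.ne'.isUnit
  have hCpd : (S * A * S).PosDef := by
    have h := conj_posDef'' hA hSu
    rwa [hS.eq] at h
  have hC : (S * A * S).IsHermitian := hCpd.isHermitian
  set u : m → ℝ := (S * P) *ᵥ v with hu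
  have hune : u ≠ 0 := by
    intro h
    apply hv
    have hinj := Matrix.mulVec_injective_iff_isUnit.mpr (hSu.mul (hP.isUnit))
    exact hinj (h.trans ((S * P).mulVec_zero).symm)
  have hCu : (S * A * S) *ᵥ u = u := by
    rw [hu, mulVec_mulVec]
    have hassoc : S * A * S * (S * P) = S * A := by
      calc S * A * S * (S * P) = S * (A * (S * S * P)) := by
            simp only [Matrix.mul_assoc]
      _ = S * (A * (P⁻¹ * P)) := by rw [hSS]
      _ = S * A := by rw [Matrix.nonsing_inv_mul P hPdet, Matrix.mul_one]
    rw [hassoc, ← mulVec_mulVec, hAv, mulVec_mulVec]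
  obtain ⟨j, hj⟩ := exists_eigenvalue_one'' hC hune hCu
  refine ⟨(Tuple.sort hC.eigenvalues₀).symm
    ((Fintype.equivOfCardEq (Fintype.card_fin _)).symm j), ?_⟩
  obtain ⟨hC2, hgeq⟩ := genEig_spec hA.isHermitian hP
    ((Tuple.sort hC.eigenvalues₀).symm ((Fintype.equivOfCardEq (Fintype.card_fin _)).symm j))
  rw [hgeq]
  have hCC : hC2.eigenvalues₀ = hC.eigenvalues₀ := rfl
  rw [hCC, Equiv.apply_symm_apply]
  exact hj

section PrecondLemmas

variable {n : ℕ} {B : Matrix (Fin n) (Fin n) ℝ}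

lemma lump_sub_posSemidef' {m : Type*} [Fintype m] [DecidableEq m]
    {R : Matrix m m ℝ} (hR : R.IsHermitian) :
    (lump R - R).PosSemidef := by
  have hRsym : ∀ j k, R j k = R k j := fun j k => by
    conv_lhs => rw [← hR.eq]
    simp [Matrix.conjTranspose_apply]
  rw [Matrix.posSemidef_iff_dotProduct_mulVec]
  constructor
  · exact (Matrix.isHermitian_diagonal _).sub hR
  · intro x
    have hsx : star x = x := funext fun j => star_trivial _
    rw [hsx, Matrix.sub_mulVec, dotProduct_sub]
    have h1 : x ⬝ᵥ (lump R *ᵥ x) = ∑ j, ∑ k, |R j k| * x j ^ 2 := by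
      simp only [lump, dotProduct, mulVec_diagonal, Finset.sum_mul, Finset.mul_sum]
      exact Finset.sum_congr rfl fun j _ => Finset.sum_congr rfl fun k _ => by ring
    have h2 : x ⬝ᵥ (R *ᵥ x) = ∑ j, ∑ k, R j k * (x j * x k) := by
      simp only [dotProduct, mulVec, Finset.mul_sum]
      exact Finset.sum_congr rfl fun j _ => Finset.sum_congr rfl fun k _ => by ring
    have h3 : ∑ j, ∑ k, |R j k| * x j ^ 2 = ∑ j, ∑ k, |R j k| * x k ^ 2 := by
      rw [Finset.sum_comm]
      exact Finset.sum_congr rfl fun k _ => Finset.sum_congr rfl fun j _ => by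
        rw [hRsym j k]
    have h4 : (2:ℝ) * ∑ j, ∑ k, R j k * (x j * x k)
        ≤ ∑ j, ∑ k, (|R j k| * x j ^ 2 + |R j k| * x k ^ 2) := by
      rw [Finset.mul_sum]
      simp_rw [Finset.mul_sum]
      refine Finset.sum_le_sum fun j _ => Finset.sum_le_sum fun k _ => ?_
      nlinarith [mul_nonneg (sub_nonneg.2 (neg_abs_le (R j k))) (sq_nonneg (x j - x k)),
        mul_nonneg (sub_nonneg.2 (le_abs_self (R j k))) (sq_nonneg (x j + x k)),
        mul_nonneg (sub_nonneg.2 (neg_abs_le (R j k))) (sq_nonneg (x j + x k)),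
        mul_nonneg (sub_nonneg.2 (le_abs_self (R j k))) (sq_nonneg (x j - x k))]
    have h5 : ∑ j, ∑ k, (|R j k| * x j ^ 2 + |R j k| * x k ^ 2)
        = (∑ j, ∑ k, |R j k| * x j ^ 2) + ∑ j, ∑ k, |R j k| * x k ^ 2 := by
      simp_rw [Finset.sum_add_distrib]
    rw [h1, h2]
    rw [h5, ← h3] at h4
    linarith

lemma diagBand_isHermitian' (hB : B.IsHermitian) (i : ℕ) : (diagBand B i).IsHermitian := by
  have hBs : ∀ p q, B p q = B q p := fun p q => by
    conv_lhs => rw [← hB.eq]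
    simp [Matrix.conjTranspose_apply]
  ext j k
  simp only [Matrix.conjTranspose_apply, diagBand, Matrix.of_apply, star_trivial]
  rw [abs_sub_comm, hBs k j]

lemma sub_diagBand_nonneg' (hBnn : ∀ p q, 0 ≤ B p q) (i : ℕ) :
    ∀ p q, 0 ≤ (B - diagBand B i) p q := by
  intro p q
  simp only [Matrix.sub_apply, diagBand, Matrix.of_apply]
  split_ifs with h
  · simp
  · simpa using hBnn p q

lemma precond_mulVec_one' (hBnn : ∀ p q, 0 ≤ B p q) (i : ℕ) :
    B *ᵥ (fun _ => (1 : ℝ)) = precond B i *ᵥ (fun _ => (1 : ℝ)) := by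
  have habs : ∀ p q, |(B - diagBand B i) p q| = (B - diagBand B i) p q :=
    fun p q => abs_of_nonneg (sub_diagBand_nonneg' hBnn i p q)
  funext j
  simp only [mulVec, dotProduct, mul_one, precond, Matrix.add_apply, lump,
    Matrix.diagonal_apply]
  rw [Finset.sum_add_distrib]
  simp only [Finset.sum_ite_eq, Finset.mem_univ, if_true]
  rw [Finset.sum_congr rfl fun l _ => habs j l]
  rw [← Finset.sum_add_distrib]
  exact Finset.sum_congr rfl fun k _ => by simp [Matrix.sub_apply]

lemma precond_posDef' (hB : B.PosDef) (i : ℕ) :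
    (precond B i).PosDef ∧ (precond B i - B).PosSemidef := by
  have hD := diagBand_isHermitian' hB.isHermitian i
  have hR : (B - diagBand B i).IsHermitian := hB.isHermitian.sub hD
  have hM := lump_sub_posSemidef' hR
  have hPeq : precond B i = B + (lump (B - diagBand B i) - (B - diagBand B i)) := by
    rw [precond]; abel
  have hPs : precond B i - B = lump (B - diagBand B i) - (B - diagBand B i) := by
    rw [precond]; abel
  exact ⟨hPeq ▸ hB.add_posSemidef hM, hPs ▸ hM⟩

end PrecondLemmas

/-- all generalized eigenvalues of `(B, P_i)` lie in `(0, 1]`;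
if moreover `B` is nonnegative then the largest one equals `1` and `B e = P_i e`. -/
theorem stmt_17 {n : ℕ} (B : Matrix (Fin (n + 1)) (Fin (n + 1)) ℝ) (hB : B.PosDef) :
    (∀ i : ℕ, 1 ≤ i → i ≤ n + 1 → ∀ k : Fin (n + 1),
      0 < genEigFin B (precond B i) k ∧ genEigFin B (precond B i) k ≤ 1) ∧
    ((∀ p q, 0 ≤ B p q) → ∀ i : ℕ, 1 ≤ i → i ≤ n + 1 →
      IsGreatest (Set.range (genEigFin B (precond B i))) 1 ∧
      B *ᵥ (fun _ => (1 : ℝ)) = precond B i *ᵥ (fun _ => (1 : ℝ))) := by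
  have h1 : ∀ i : ℕ, ∀ k : Fin (n+1),
      0 < genEigFin B (precond B i) k ∧ genEigFin B (precond B i) k ≤ 1 := by
    intro i k
    exact genEig_bounds'' hB (precond_posDef' hB i).1 (precond_posDef' hB i).2 _
  refine ⟨fun i _ _ k => h1 i k, fun hBnn i _ _ => ?_⟩
  have hve : B *ᵥ (fun _ => (1:ℝ)) = precond B i *ᵥ (fun _ => (1:ℝ)) :=
    precond_mulVec_one' hBnn i
  refine ⟨⟨?_, ?_⟩, hve⟩
  · obtain ⟨k, hk⟩ := one_mem_genEig'' hB (precond_posDef' hB i).1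
      (v := fun _ => (1:ℝ)) (fun h => by simpa using congrFun h 0) hve
    refine ⟨Fin.cast (Fintype.card_fin _) k, ?_⟩
    rw [genEigFin]
    exact hk
  · rintro x ⟨k, rfl⟩
    exact (h1 i k).2
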